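/- Branch contraction preserves global traces: if g is a prefix with pid(g) ∩ pid(g_i) = ∅ for all i ∈ I (where g_i = p→q:l_i are the branch guards), then Tr(p→q:{l_i : g;G_i}_{i∈I}) = Tr(g;(p→q:{l_i:G_i}_{i∈I})). -/

import Mathlib

abbrev Label := ℕ

inductive VTy
  | bool | nat
deriving DecidableEq

inductive Msg
  | val (U : VTy)
  | lab (l : Label)
deriving DecidableEq

structure Pref where
  sender : ℕ
  receiver : ℕ
  msg : Msg
deriving DecidableEq

def Pref.pid (g : Pref) : Set ℕ := {g.sender, g.receiver}

inductive Global
  | comm (g : Pref) (G : Global)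
  | branch (p q : ℕ) (bs : List (Label × Global))
  | var (t : ℕ)
  | mu (t : ℕ) (G : Global)
  | gend

namespace Global

def subst (t : ℕ) (H : Global) : Global → Global
  | comm g G => comm g (subst t H G)
  | branch p q bs => branch p q (bs.attach.map fun ⟨⟨l, G⟩, h⟩ => (l, subst t H G))
  | var s => if s = t then H else var s
  | mu s G => if s = t then mu s G else mu s (subst t H G)
  | gend => gend
decreasing_by
  all_goals simp_wf
  all_goals try (have := List.sizeOf_lt_of_mem h; simp only [Prod.mk.sizeOf_spec] at this)
  all_goals try simp only [Global.branch.sizeOf_spec, Global.mu.sizeOf_spec, Global.comm.sizeOf_spec] at *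
  all_goals omega

end Global

inductive GStep : Global → Pref → Global → Prop
  | inter (g : Pref) (G : Global) :
      GStep (.comm g G) g G
  | selbra {p q : ℕ} {bs : List (Label × Global)} {l : Label} {Gk : Global} :
      (l, Gk) ∈ bs →
      GStep (.branch p q bs) ⟨p, q, .lab l⟩ Gk
  | iperm {G G' : Global} {g g' : Pref} :
      GStep G g' G' → g.pid ∩ g'.pid = ∅ →
      GStep (.comm g G) g' (.comm g G')
  | sbperm {p q : ℕ} {bs bs' : List (Label × Global)} {g' : Pref} :
      bs.length = bs'.length →
      (∀ bb ∈ bs.zip bs', bb.1.1 = bb.2.1) →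
      (∀ bb ∈ bs.zip bs', GStep bb.1.2 g' bb.2.2) →
      g'.pid ∩ ({p, q} : Set ℕ) = ∅ →
      GStep (.branch p q bs) g' (.branch p q bs')
  | recur {t : ℕ} {G G' : Global} {g : Pref} :
      GStep (Global.subst t (.mu t G) G) g G' →
      GStep (.mu t G) g G'

inductive GSteps : Global → List Pref → Global → Prop
  | refl (G : Global) : GSteps G [] G
  | cons {G G₁ G₂ : Global} {g : Pref} {tr : List Pref} :
      GStep G g G₁ → GSteps G₁ tr G₂ → GSteps G (g :: tr) G₂

def GTraces (G : Global) : Set (List Pref) := {tr | ∃ G', GSteps G tr G'}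

/-! ### Local types -/

inductive Local
  | send (q : ℕ) (m : Msg) (T : Local)
  | recv (p : ℕ) (m : Msg) (T : Local)
  | sel (q : ℕ) (bs : List (Label × Local))
  | bra (p : ℕ) (bs : List (Label × Local))
  | var (t : ℕ)
  | mu (t : ℕ) (T : Local)
  | lend

namespace Local

def subst (t : ℕ) (H : Local) : Local → Local
  | send q m T => send q m (subst t H T)
  | recv p m T => recv p m (subst t H T)
  | sel q bs => sel q (bs.attach.map fun ⟨⟨l, T⟩, h⟩ => (l, subst t H T))
  | bra p bs => bra p (bs.attach.map fun ⟨⟨l, T⟩, h⟩ => (l, subst t H T))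
  | var s => if s = t then H else var s
  | mu s T => if s = t then mu s T else mu s (subst t H T)
  | lend => lend
decreasing_by
  all_goals simp_wf
  all_goals try (have := List.sizeOf_lt_of_mem h; simp only [Prod.mk.sizeOf_spec] at this)
  all_goals try simp only [Local.sel.sizeOf_spec, Local.bra.sizeOf_spec, Local.mu.sizeOf_spec] at *
  all_goals omega

end Local

/-- Local labels `ℓ ::= q!m | p?m`. -/
inductive LLabel
  | send (q : ℕ) (m : Msg)
  | recv (p : ℕ) (m : Msg)
deriving DecidableEq

/-- The labelled transition system over local types. -/
inductive LStep : Local → LLabel → Local → Prop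
  | send {q : ℕ} {m : Msg} {T : Local} : LStep (.send q m T) (.send q m) T
  | recv {p : ℕ} {m : Msg} {T : Local} : LStep (.recv p m T) (.recv p m) T
  | sel {q : ℕ} {bs : List (Label × Local)} {l : Label} {T : Local} :
      (l, T) ∈ bs → LStep (.sel q bs) (.send q (.lab l)) T
  | bra {p : ℕ} {bs : List (Label × Local)} {l : Label} {T : Local} :
      (l, T) ∈ bs → LStep (.bra p bs) (.recv p (.lab l)) T
  | recur {t : ℕ} {T T' : Local} {ℓ : LLabel} :
      LStep (Local.subst t (.mu t T) T) ℓ T' → LStep (.mu t T) ℓ T'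

/-- The set of labels occurring in a list of local branches. -/
def labelsOf (bs : List (Label × Local)) : Set Label := {l | ∃ T, (l, T) ∈ bs}

/-! ### Merging of local types -/

mutual
  /-- The (partial, relationally presented) merge operator `T₁ ⊔ T₂ = T₃` on local types:
  homomorphic everywhere except at branchings, which are merged by taking the union
  of branches, merging continuations of common labels. -/
  inductive Merge : Local → Local → Local → Prop
    | send {q m T₁ T₂ T₃} : Merge T₁ T₂ T₃ → Merge (.send q m T₁) (.send q m T₂) (.send q m T₃)
    | recv {p m T₁ T₂ T₃} : Merge T₁ T₂ T₃ → Merge (.recv p m T₁) (.recv p m T₂) (.recv p m T₃)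
    | sel {q bs₁ bs₂ bs₃} : MergeBs bs₁ bs₂ bs₃ → Merge (.sel q bs₁) (.sel q bs₂) (.sel q bs₃)
    | bra {p : ℕ} {bs₁ bs₂ bs₃ : List (Label × Local)} :
        labelsOf bs₃ = labelsOf bs₁ ∪ labelsOf bs₂ →
        (∀ l T₃, (l, T₃) ∈ bs₃ → MergeBranch bs₁ bs₂ l T₃) →
        Merge (.bra p bs₁) (.bra p bs₂) (.bra p bs₃)
    | var {t} : Merge (.var t) (.var t) (.var t)
    | mu {t T₁ T₂ T₃} : Merge T₁ T₂ T₃ → Merge (.mu t T₁) (.mu t T₂) (.mu t T₃)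
    | lend : Merge .lend .lend .lend

  /-- Pointwise merging of selection branches (same labels in the same order). -/
  inductive MergeBs : List (Label × Local) → List (Label × Local) → List (Label × Local) → Prop
    | nil : MergeBs [] [] []
    | cons {l T₁ T₂ T₃ bs₁ bs₂ bs₃} :
        Merge T₁ T₂ T₃ → MergeBs bs₁ bs₂ bs₃ →
        MergeBs ((l, T₁) :: bs₁) ((l, T₂) :: bs₂) ((l, T₃) :: bs₃)

  /-- How a branch `(l, T₃)` of a merged branching arises from the two merged lists. -/
  inductive MergeBranch : List (Label × Local) → List (Label × Local) → Label → Local → Prop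
    | both {bs₁ bs₂ l T₁ T₂ T₃} :
        (l, T₁) ∈ bs₁ → (l, T₂) ∈ bs₂ → Merge T₁ T₂ T₃ → MergeBranch bs₁ bs₂ l T₃
    | left {bs₁ bs₂ l T₃} :
        (l, T₃) ∈ bs₁ → l ∉ labelsOf bs₂ → MergeBranch bs₁ bs₂ l T₃
    | right {bs₁ bs₂ l T₃} :
        (l, T₃) ∈ bs₂ → l ∉ labelsOf bs₁ → MergeBranch bs₁ bs₂ l T₃
end

/-- Iterated merge `⊔ᵢ Tᵢ` of a (nonempty) family of local types. -/
inductive MergeList : List Local → Local → Prop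
  | single {T} : MergeList [T] T
  | cons {T T' T'' : Local} {Ts : List Local} :
      MergeList Ts T' → Merge T T' T'' → MergeList (T :: Ts) T''

/-! ### Projection of global types onto participants -/

/-- `Proj G r T` is the graph of the (partial) projection function `⌊G⌋r = T`. -/
inductive Proj : Global → ℕ → Local → Prop
  | comm_send {g : Pref} {G : Global} {r : ℕ} {T : Local} :
      r = g.sender → r ≠ g.receiver → Proj G r T →
      Proj (.comm g G) r (.send g.receiver g.msg T)
  | comm_recv {g : Pref} {G : Global} {r : ℕ} {T : Local} :
      r = g.receiver → r ≠ g.sender → Proj G r T →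
      Proj (.comm g G) r (.recv g.sender g.msg T)
  | comm_skip {g : Pref} {G : Global} {r : ℕ} {T : Local} :
      r ≠ g.sender → r ≠ g.receiver → Proj G r T →
      Proj (.comm g G) r T
  | branch_sel {p q : ℕ} {bs : List (Label × Global)} {bs' : List (Label × Local)} :
      p ≠ q →
      bs.length = bs'.length →
      (∀ bb ∈ bs.zip bs', bb.1.1 = bb.2.1) →
      (∀ bb ∈ bs.zip bs', Proj bb.1.2 p bb.2.2) →
      Proj (.branch p q bs) p (.sel q bs')
  | branch_bra {p q : ℕ} {bs : List (Label × Global)} {bs' : List (Label × Local)} :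
      p ≠ q →
      bs.length = bs'.length →
      (∀ bb ∈ bs.zip bs', bb.1.1 = bb.2.1) →
      (∀ bb ∈ bs.zip bs', Proj bb.1.2 q bb.2.2) →
      Proj (.branch p q bs) q (.bra p bs')
  | branch_merge {p q r : ℕ} {bs : List (Label × Global)} {Ts : List Local} {T : Local} :
      r ≠ p → r ≠ q →
      bs.length = Ts.length →
      (∀ bb ∈ bs.zip Ts, Proj bb.1.2 r bb.2) →
      MergeList Ts T →
      Proj (.branch p q bs) r T
  | mu_proj {t : ℕ} {G : Global} {r : ℕ} {T : Local} :
      Proj G r T → T ≠ .var t → Proj (.mu t G) r (.mu t T)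
  | mu_end {t : ℕ} {G : Global} {r : ℕ} :
      Proj G r (.var t) → Proj (.mu t G) r .lend
  | var {t r} : Proj (.var t) r (.var t)
  | gend {r} : Proj .gend r .lend

/-! ### Isomorphism of global types -/

/-- `Iso G₁ G₂` (`G₁ ≅ G₂`): the smallest congruence on global types containing
prefix commutativity, branching, and branching distributivity (branch index
sets are nonempty, as usual for multiparty session types). -/
inductive Iso : Global → Global → Prop
  | refl (G : Global) : Iso G G
  | symm {G G'} : Iso G G' → Iso G' G
  | trans {G G' G''} : Iso G G' → Iso G' G'' → Iso G G''
  | comm_cong {g : Pref} {G G'} : Iso G G' → Iso (.comm g G) (.comm g G')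
  | branch_cong {p q : ℕ} {bs bs' : List (Label × Global)} :
      bs.length = bs'.length →
      (∀ bb ∈ bs.zip bs', bb.1.1 = bb.2.1) →
      (∀ bb ∈ bs.zip bs', Iso bb.1.2 bb.2.2) →
      Iso (.branch p q bs) (.branch p q bs')
  | mu_cong {t : ℕ} {G G'} : Iso G G' → Iso (.mu t G) (.mu t G')
  | swap {g₁ g₂ : Pref} {G : Global} :
      g₁.pid ∩ g₂.pid = ∅ →
      Iso (.comm g₁ (.comm g₂ G)) (.comm g₂ (.comm g₁ G))
  | branching {p q : ℕ} {g : Pref} {bs : List (Label × Global)} :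
      bs ≠ [] →
      g.pid ∩ ({p, q} : Set ℕ) = ∅ →
      Iso (.branch p q (bs.map fun b => (b.1, .comm g b.2))) (.comm g (.branch p q bs))
  | distrib {p q r s : ℕ} {lsI : List Label} {bsJ : List (Label × Global)} :
      lsI ≠ [] → bsJ ≠ [] →
      ({p, q} : Set ℕ) ∩ ({r, s} : Set ℕ) = ∅ →
      Iso (.branch p q (lsI.map fun l => (l, .branch r s bsJ)))
          (.branch r s (bsJ.map fun bj => (bj.1, .branch p q (lsI.map fun l => (l, bj.2)))))

/-! ### Configurations and their synchronous semantics -/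

/-- A configuration: a family of local types, one per participant. -/
abbrev Config := ℕ → Local

/-- The synchronous transition `[Synch]` between configurations, labelled by
the communication `p → q : m` (the pair of dual local labels `q!m · p?m`). -/
inductive CStep : Config → Pref → Config → Prop
  | synch {Δ Δ' : Config} {p q : ℕ} {m : Msg} :
      p ≠ q →
      LStep (Δ p) (.send q m) (Δ' p) →
      LStep (Δ q) (.recv p m) (Δ' q) →
      (∀ r, r ≠ p → r ≠ q → Δ' r = Δ r) →
      CStep Δ ⟨p, q, m⟩ Δ'

/-- Multi-step synchronous execution of a configuration. -/
inductive CSteps : Config → List Pref → Config → Prop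
  | refl (Δ : Config) : CSteps Δ [] Δ
  | cons {Δ Δ₁ Δ₂ : Config} {g : Pref} {tr : List Pref} :
      CStep Δ g Δ₁ → CSteps Δ₁ tr Δ₂ → CSteps Δ (g :: tr) Δ₂

/-- The configuration trace set `T_S(Δ)`, identifying the synchronisation label
`q!m · p?m` with the global label `p → q : m`. -/
def CTraces (Δ : Config) : Set (List Pref) := {tr | ∃ Δ', CSteps Δ tr Δ'}

/-- Configuration traces `σ`: per-participant sequences of local labels. -/
abbrev CTrace := ℕ → List LLabel

/-- The execution relation `Δ ↝^σ_synch Δ'`, accumulating per participant the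
local labels of a sequence of `[Synch]` steps. -/
inductive Exec : Config → CTrace → Config → Prop
  | refl (Δ : Config) : Exec Δ (fun _ => []) Δ
  | step {Δ Δ₁ Δ₂ : Config} {σ : CTrace} {g : Pref} :
      Exec Δ σ Δ₁ → CStep Δ₁ g Δ₂ →
      Exec Δ
        (fun r =>
          if r = g.sender then σ r ++ [.send g.receiver g.msg]
          else if r = g.receiver then σ r ++ [.recv g.sender g.msg]
          else σ r)
        Δ₂

/-- Terminated configurations: no `[Synch]` transition is available. -/
def Terminated (Δ : Config) : Prop := ∀ g Δ', ¬ CStep Δ g Δ'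

/-- The denotation of a configuration: its set of terminated traces. -/
def Denot (Δ : Config) : Set CTrace := {σ | ∃ Δ', Exec Δ σ Δ' ∧ Terminated Δ'}

namespace BCAux

/-- The branch-decoration map `b ↦ (b.1, g ; b.2)`. -/
def cm (g : Pref) : Label × Global → Label × Global := fun b => (b.1, .comm g b.2)

lemma pid_self_ne (g : Pref) : g.pid ∩ g.pid ≠ ∅ := by
  rw [Set.inter_self]
  intro h
  have : g.sender ∈ g.pid := Set.mem_insert _ _
  rw [h] at this
  exact this

lemma mem_zip_map_left {α β : Type*} (h : α → β) :
    ∀ (l : List α) (x : β × α), x ∈ (l.map h).zip l → ∃ a ∈ l, x = (h a, a) := by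
  intro l
  induction l with
  | nil => intro x hx; simp at hx
  | cons a l ih =>
    intro x hx
    rw [List.map_cons, List.zip_cons_cons] at hx
    rcases List.mem_cons.1 hx with h1 | h1
    · exact ⟨a, List.mem_cons_self, h1⟩
    · obtain ⟨a', ha', hx'⟩ := ih x h1
      exact ⟨a', List.mem_cons_of_mem _ ha', hx'⟩

/-- If every decorated branch `g;Gᵢ` steps with label `g`, each step must be
`[Inter]` (since `pid g ∩ pid g ≠ ∅` rules out `[IPerm]`), so the updated
branches are exactly the undecorated ones. -/
lemma all_inter (g : Pref) :
    ∀ (bs cs : List (Label × Global)),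
      (bs.map (cm g)).length = cs.length →
      (∀ x ∈ (bs.map (cm g)).zip cs, x.1.1 = x.2.1) →
      (∀ x ∈ (bs.map (cm g)).zip cs, GStep x.1.2 g x.2.2) →
      cs = bs := by
  intro bs
  induction bs with
  | nil =>
    intro cs hlen _ _
    simp at hlen
    exact List.length_eq_zero_iff.1 hlen.symm
  | cons b bs ih =>
    intro cs hlen hlab hstp
    cases cs with
    | nil => simp at hlen
    | cons c cs =>
      obtain ⟨bl, bG⟩ := b
      obtain ⟨cl, cG⟩ := c
      rw [List.map_cons, List.zip_cons_cons] at hlab hstp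
      have hhead : GStep (.comm g bG) g cG := hstp _ (List.mem_cons_self)
      have hlabhead : bl = cl := hlab _ (List.mem_cons_self)
      have htail := ih cs (by simpa using hlen)
        (fun x hx => hlab x (List.mem_cons_of_mem _ hx))
        (fun x hx => hstp x (List.mem_cons_of_mem _ hx))
      cases hhead with
      | inter => rw [htail, hlabhead]
      | iperm _ hd => exact absurd hd (pid_self_ne g)

/-- If `pid g ∩ pid g' = ∅`, every step of a decorated branch `g;Gᵢ` with
label `g'` must be `[IPerm]`, so the updated branches are again decorated. -/
lemma extract (g g' : Pref) (hgg' : g.pid ∩ g'.pid = ∅) :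
    ∀ (bs cs : List (Label × Global)),
      (bs.map (cm g)).length = cs.length →
      (∀ x ∈ (bs.map (cm g)).zip cs, x.1.1 = x.2.1) →
      (∀ x ∈ (bs.map (cm g)).zip cs, GStep x.1.2 g' x.2.2) →
      ∃ bs', cs = bs'.map (cm g) ∧ bs.length = bs'.length ∧
        (∀ x ∈ bs.zip bs', x.1.1 = x.2.1) ∧
        (∀ x ∈ bs.zip bs', GStep x.1.2 g' x.2.2) := by
  intro bs
  induction bs with
  | nil =>
    intro cs hlen _ _
    simp at hlen
    refine ⟨[], List.length_eq_zero_iff.1 hlen.symm, rfl, ?_, ?_⟩ <;> simp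
  | cons b bs ih =>
    intro cs hlen hlab hstp
    cases cs with
    | nil => simp at hlen
    | cons c cs =>
      obtain ⟨bl, bG⟩ := b
      obtain ⟨cl, cG⟩ := c
      rw [List.map_cons, List.zip_cons_cons] at hlab hstp
      have hhead : GStep (.comm g bG) g' cG := hstp _ (List.mem_cons_self)
      have hlabhead : bl = cl := hlab _ (List.mem_cons_self)
      obtain ⟨bs', hcs, hlen', hlab', hstp'⟩ := ih cs (by simpa using hlen)
        (fun x hx => hlab x (List.mem_cons_of_mem _ hx))
        (fun x hx => hstp x (List.mem_cons_of_mem _ hx))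
      cases hhead with
      | inter =>
        exfalso
        apply pid_self_ne g
        exact hgg'
      | @iperm _ G₂ _ _ hstep hd =>
        refine ⟨(bl, G₂) :: bs', ?_, by simp [hlen'], ?_, ?_⟩
        · rw [hcs, hlabhead]; rfl
        · intro x hx
          rw [List.zip_cons_cons] at hx
          rcases List.mem_cons.1 hx with h1 | h1
          · rw [h1]
          · exact hlab' x h1
        · intro x hx
          rw [List.zip_cons_cons] at hx
          rcases List.mem_cons.1 hx with h1 | h1
          · rw [h1]; exact hstep
          · exact hstp' x h1

lemma forward (p q : ℕ) (g : Pref) (hdisj : g.pid ∩ ({p, q} : Set ℕ) = ∅) :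
    ∀ (tr : List Pref) (bs : List (Label × Global)) (G' : Global), bs ≠ [] →
      GSteps (.branch p q (bs.map (cm g))) tr G' →
      ∃ G'', GSteps (.comm g (.branch p q bs)) tr G'' := by
  intro tr
  induction tr with
  | nil => intro bs G' _ _; exact ⟨_, GSteps.refl _⟩
  | cons g' tr ih =>
    intro bs G' hne hsteps
    cases hsteps with
    | @cons _ G₁ _ _ _ hstep hrest =>
      cases hstep with
      | selbra hmem =>
        rename_i l
        obtain ⟨b, hb, hfb⟩ := List.mem_map.1 hmem
        have hb1 : b.1 = l := congrArg Prod.fst hfb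
        have hb2 : Global.comm g b.2 = G₁ := congrArg Prod.snd hfb
        have hmem' : (l, b.2) ∈ bs := by rw [← hb1]; exact hb
        exact ⟨G', GSteps.cons
          (GStep.iperm (GStep.selbra hmem') hdisj) (hb2 ▸ hrest)⟩
      | sbperm hlen hlab hstp hdisj' =>
        rename_i cs
        by_cases hd : g.pid ∩ g'.pid = ∅
        · obtain ⟨bs', hcs, hlen', hlab', hstp'⟩ := extract g g' hd bs cs hlen hlab hstp
          subst hcs
          have hne' : bs' ≠ [] := by
            intro h; subst h; simp at hlen'
            exact hne hlen'

          obtain ⟨G'', hG''⟩ := ih bs' G' hne' hrest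
          exact ⟨G'', GSteps.cons
            (GStep.iperm (GStep.sbperm hlen' hlab' hstp' hdisj') hd) hG''⟩
        · -- the label must be `g` and every branch takes `[Inter]`
          cases bs with
          | nil => exact absurd rfl hne
          | cons b bs₀ =>
            cases cs with
            | nil => simp at hlen
            | cons c cs₀ =>
              obtain ⟨bl, bG⟩ := b
              obtain ⟨cl, cG⟩ := c
              have hhead : GStep (.comm g bG) g' cG := by
                have := hstp (cm g (bl, bG), (cl, cG)) (by
                  rw [List.map_cons, List.zip_cons_cons]
                  exact List.mem_cons_self)
                exact this
              cases hhead with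
              | inter =>
                have hcs := all_inter g _ _ hlen hlab hstp
                exact ⟨G', GSteps.cons (GStep.inter g _) (hcs ▸ hrest)⟩
              | iperm _ hd' => exact absurd hd' hd

lemma backward (p q : ℕ) (g : Pref) (hdisj : g.pid ∩ ({p, q} : Set ℕ) = ∅) :
    ∀ (tr : List Pref) (bs : List (Label × Global)) (G' : Global), bs ≠ [] →
      GSteps (.comm g (.branch p q bs)) tr G' →
      ∃ G'', GSteps (.branch p q (bs.map (cm g))) tr G'' := by
  intro tr
  induction tr with
  | nil => intro bs G' _ _; exact ⟨_, GSteps.refl _⟩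
  | cons g' tr ih =>
    intro bs G' hne hsteps
    cases hsteps with
    | @cons _ G₁ _ _ _ hstep hrest =>
      cases hstep with
      | inter =>
        -- simulate by `[SBPerm]` where every branch takes `[Inter]`
        have hstep' : GStep (.branch p q (bs.map (cm g))) g (.branch p q bs) := by
          refine GStep.sbperm (by simp) ?_ ?_ hdisj
          · intro x hx
            obtain ⟨a, _, hxa⟩ := mem_zip_map_left (cm g) bs x hx
            rw [hxa]; rfl
          · intro x hx
            obtain ⟨a, _, hxa⟩ := mem_zip_map_left (cm g) bs x hx
            rw [hxa]
            exact GStep.inter g a.2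
        exact ⟨G', GSteps.cons hstep' hrest⟩
      | @iperm _ G₂ _ _ hinner hd =>
        cases hinner with
        | selbra hmem =>
          rename_i l
          have hmem' : (l, Global.comm g G₂) ∈ bs.map (cm g) :=
            List.mem_map.2 ⟨(l, G₂), hmem, rfl⟩
          exact ⟨G', GSteps.cons (GStep.selbra hmem') hrest⟩
        | sbperm hlen hlab hstp hdisj2 =>
          rename_i bs''

          have hstep' : GStep (.branch p q (bs.map (cm g))) g'
              (.branch p q (bs''.map (cm g))) := by
            refine GStep.sbperm (by simp [hlen]) ?_ ?_ hdisj2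
            · intro x hx
              rw [List.zip_map] at hx
              obtain ⟨y, hy, hxy⟩ := List.mem_map.1 hx
              rw [← hxy]
              exact hlab y hy
            · intro x hx
              rw [List.zip_map] at hx
              obtain ⟨y, hy, hxy⟩ := List.mem_map.1 hx
              rw [← hxy]
              exact GStep.iperm (hstp y hy) hd
          have hne'' : bs'' ≠ [] := by
            intro h; subst h; simp at hlen
            exact hne hlen
          obtain ⟨G'', hG''⟩ := ih bs'' G' hne'' hrest
          exact ⟨G'', GSteps.cons hstep' hG''⟩

end BCAux

/-- Branch contraction preserves global traces: if `g` is a prefix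
with `pid(g) ∩ pid(g_i) = ∅` for all `i ∈ I` (where `pid(g_i) = {p, q}` and `I` is
nonempty), then `Tr(p→q:{l_i : g;G_i}_{i∈I}) = Tr(g;(p→q:{l_i:G_i}_{i∈I}))`. -/
theorem branch_contraction_preserves_traces
    (p q : ℕ) (g : Pref) (bs : List (Label × Global))
    (hne : bs ≠ [])
    (hdisj : g.pid ∩ ({p, q} : Set ℕ) = ∅) :
    GTraces (.branch p q (bs.map fun b => (b.1, .comm g b.2)))
      = GTraces (.comm g (.branch p q bs)) := by
  ext tr
  constructor
  · rintro ⟨G', h⟩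
    exact BCAux.forward p q g hdisj tr bs G' hne h
  · rintro ⟨G', h⟩
    exact BCAux.backward p q g hdisj tr bs G' hne h
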